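/- Let ω ∈ {0,1}ⁿ be a finite binary word, let M_ω be the product of the matrices M₀, M₁ corresponding to the letters of ω, and write M_ω = ((ρ,σ,τ),(ρ₁,σ₁,τ₁),(ρ₂,σ₂,τ₂)) row-wise. Let ξ ∈ [0,1] and (α,β) := φ_ω(ξ,0). Then there exists a constant c > 0, independent of p and q, such that for all integers p and positive integers q with 0 ≤ p ≤ q and |ξq − p| ≤ 1/q, setting s := ρq + σp, m := ρ₁q + σ₁p, n := ρ₂q + σ₂p, one has |α − m/s| ≤ c/(q·s) and |β − n/s| ≤ c/(q·s). -/

import Mathlib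

noncomputable def phi0 (p : ℝ × ℝ) : ℝ × ℝ := (1 / (1 + p.2), p.1 / (1 + p.2))
noncomputable def phi1 (p : ℝ × ℝ) : ℝ × ℝ := (p.1 / (1 + p.2), p.2 / (1 + p.2))

/-- The matrix representing a letter of a binary word: `M₀` for `false`, `M₁` for `true`. -/
def matOf : Bool → Matrix (Fin 3) (Fin 3) ℤ
  | false => !![1, 0, 1; 1, 0, 0; 0, 1, 0]
  | true => !![1, 0, 1; 0, 1, 0; 0, 0, 1]

/-- The matrix M_ω, product of the matrices of the letters of ω. -/
def Mword (ω : List Bool) : Matrix (Fin 3) (Fin 3) ℤ := (ω.map matOf).prod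

/-- The map corresponding to a letter: φ₀ for `false`, φ₁ for `true`. -/
noncomputable def phiOf : Bool → (ℝ × ℝ → ℝ × ℝ)
  | false => phi0
  | true => phi1

/-- The composition φ_ω = φ_{ω₀} ∘ φ_{ω₁} ∘ ⋯ ∘ φ_{ω_{n-1}}. -/
noncomputable def phiWord : List Bool → (ℝ × ℝ → ℝ × ℝ)
  | [] => id
  | b :: t => phiOf b ∘ phiWord t

lemma Mword_nil : Mword [] = 1 := by simp [Mword]

lemma Mword_cons (b : Bool) (t : List Bool) : Mword (b :: t) = matOf b * Mword t := by
  simp [Mword]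

lemma Mword_entries (ω : List Bool) :
    (∀ i j, 0 ≤ Mword ω i j) ∧ 1 ≤ Mword ω 0 0 := by
  induction ω with
  | nil =>
    rw [Mword_nil]
    constructor
    · intro i j
      by_cases hij : i = j <;> simp [Matrix.one_apply, hij]
    · simp [Matrix.one_apply]
  | cons b t ih =>
    obtain ⟨h0, h1⟩ := ih
    rw [Mword_cons]
    cases b <;> constructor
    · intro i j
      fin_cases i <;>
        simp [matOf, Matrix.mul_apply, Fin.sum_univ_three] <;>
        nlinarith [h0 0 j, h0 1 j, h0 2 j]
    · simp [matOf, Matrix.mul_apply, Fin.sum_univ_three]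
      nlinarith [h0 2 0, h1]
    · intro i j
      fin_cases i <;>
        simp [matOf, Matrix.mul_apply, Fin.sum_univ_three] <;>
        nlinarith [h0 0 j, h0 1 j, h0 2 j]
    · simp [matOf, Matrix.mul_apply, Fin.sum_univ_three]
      nlinarith [h0 2 0, h1]

lemma phi_eq (ω : List Bool) (x : ℝ) (hx : 0 ≤ x) :
    phiWord ω (x, 0) =
      (((Mword ω 1 0 : ℝ) + (Mword ω 1 1 : ℝ) * x) / ((Mword ω 0 0 : ℝ) + (Mword ω 0 1 : ℝ) * x),
       ((Mword ω 2 0 : ℝ) + (Mword ω 2 1 : ℝ) * x) / ((Mword ω 0 0 : ℝ) + (Mword ω 0 1 : ℝ) * x)) := by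
  induction ω with
  | nil =>
    simp [phiWord, Mword_nil, Matrix.one_apply]
  | cons b t ih =>
    obtain ⟨h0, h1⟩ := Mword_entries t
    set M := Mword t with hM
    have hu0 : (1 : ℝ) ≤ (M 0 0 : ℝ) + (M 0 1 : ℝ) * x := by
      have : (1 : ℝ) ≤ (M 0 0 : ℝ) := by exact_mod_cast h1
      have : (0 : ℝ) ≤ (M 0 1 : ℝ) := by exact_mod_cast h0 0 1
      nlinarith [this, h1]
    have hu1 : (0 : ℝ) ≤ (M 1 0 : ℝ) + (M 1 1 : ℝ) * x := by
      have a := h0 1 0; have b := h0 1 1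
      have a' : (0:ℝ) ≤ (M 1 0 : ℝ) := by exact_mod_cast a
      have b' : (0:ℝ) ≤ (M 1 1 : ℝ) := by exact_mod_cast b
      nlinarith
    have hu2 : (0 : ℝ) ≤ (M 2 0 : ℝ) + (M 2 1 : ℝ) * x := by
      have a := h0 2 0; have b := h0 2 1
      have a' : (0:ℝ) ≤ (M 2 0 : ℝ) := by exact_mod_cast a
      have b' : (0:ℝ) ≤ (M 2 1 : ℝ) := by exact_mod_cast b
      nlinarith
    set u0 := (M 0 0 : ℝ) + (M 0 1 : ℝ) * x
    set u1 := (M 1 0 : ℝ) + (M 1 1 : ℝ) * x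
    set u2 := (M 2 0 : ℝ) + (M 2 1 : ℝ) * x
    have hu0' : u0 ≠ 0 := by positivity
    have hs : u0 + u2 > 0 := by linarith
    have hs' : u0 + u2 ≠ 0 := ne_of_gt hs
    have hcomp : phiWord (b :: t) (x, 0) = phiOf b (phiWord t (x, 0)) := rfl
    cases b
    · rw [hcomp, ih]
      have e00 : (Mword (false :: t)) 0 0 = M 0 0 + M 2 0 := by
        rw [Mword_cons]; simp [matOf, Matrix.mul_apply, Fin.sum_univ_three, hM]
      have e01 : (Mword (false :: t)) 0 1 = M 0 1 + M 2 1 := by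
        rw [Mword_cons]; simp [matOf, Matrix.mul_apply, Fin.sum_univ_three, hM]
      have e10 : (Mword (false :: t)) 1 0 = M 0 0 := by
        rw [Mword_cons]; simp [matOf, Matrix.mul_apply, Fin.sum_univ_three, hM]
      have e11 : (Mword (false :: t)) 1 1 = M 0 1 := by
        rw [Mword_cons]; simp [matOf, Matrix.mul_apply, Fin.sum_univ_three, hM]
      have e20 : (Mword (false :: t)) 2 0 = M 1 0 := by
        rw [Mword_cons]; simp [matOf, Matrix.mul_apply, Fin.sum_univ_three, hM]
      have e21 : (Mword (false :: t)) 2 1 = M 1 1 := by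
        rw [Mword_cons]; simp [matOf, Matrix.mul_apply, Fin.sum_univ_three, hM]
      rw [e00, e01, e10, e11, e20, e21]
      simp only [phiOf, phi0]
      push_cast
      have h1p : (1 : ℝ) + u2 / u0 ≠ 0 := by
        have : (0:ℝ) ≤ u2 / u0 := div_nonneg hu2 (by linarith)
        positivity
      have hden : ((M 0 0 : ℝ) + (M 2 0 : ℝ) + ((M 0 1 : ℝ) + (M 2 1 : ℝ)) * x) ≠ 0 := by
        have h : ((M 0 0 : ℝ) + (M 2 0 : ℝ) + ((M 0 1 : ℝ) + (M 2 1 : ℝ)) * x) = u0 + u2 := by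
          simp only [u0, u2]; ring
        rw [h]; exact hs'
      rw [Prod.mk.injEq]
      constructor
      · field_simp
        unfold u0 u2; rw [eq_div_iff (by rw [mul_comm x]; exact hden)]; ring
      · field_simp
        unfold u0 u2; rw [eq_div_iff (by rw [mul_comm x]; exact hden)]; ring
    · rw [hcomp, ih]
      have e00 : (Mword (true :: t)) 0 0 = M 0 0 + M 2 0 := by
        rw [Mword_cons]; simp [matOf, Matrix.mul_apply, Fin.sum_univ_three, hM]
      have e01 : (Mword (true :: t)) 0 1 = M 0 1 + M 2 1 := by
        rw [Mword_cons]; simp [matOf, Matrix.mul_apply, Fin.sum_univ_three, hM]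
      have e10 : (Mword (true :: t)) 1 0 = M 1 0 := by
        rw [Mword_cons]; simp [matOf, Matrix.mul_apply, Fin.sum_univ_three, hM]
      have e11 : (Mword (true :: t)) 1 1 = M 1 1 := by
        rw [Mword_cons]; simp [matOf, Matrix.mul_apply, Fin.sum_univ_three, hM]
      have e20 : (Mword (true :: t)) 2 0 = M 2 0 := by
        rw [Mword_cons]; simp [matOf, Matrix.mul_apply, Fin.sum_univ_three, hM]
      have e21 : (Mword (true :: t)) 2 1 = M 2 1 := by
        rw [Mword_cons]; simp [matOf, Matrix.mul_apply, Fin.sum_univ_three, hM]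
      rw [e00, e01, e10, e11, e20, e21]
      simp only [phiOf, phi1]
      push_cast
      have h1p : (1 : ℝ) + u2 / u0 ≠ 0 := by
        have : (0:ℝ) ≤ u2 / u0 := div_nonneg hu2 (by linarith)
        positivity
      have hden : ((M 0 0 : ℝ) + (M 2 0 : ℝ) + ((M 0 1 : ℝ) + (M 2 1 : ℝ)) * x) ≠ 0 := by
        have h : ((M 0 0 : ℝ) + (M 2 0 : ℝ) + ((M 0 1 : ℝ) + (M 2 1 : ℝ)) * x) = u0 + u2 := by
          simp only [u0, u2]; ring
        rw [h]; exact hs'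
      rw [Prod.mk.injEq]
      constructor
      · field_simp
        unfold u0 u2; rw [eq_div_iff (by rw [mul_comm x]; exact hden)]; ring
      · field_simp
        unfold u0 u2; rw [eq_div_iff (by rw [mul_comm x]; exact hden)]; ring

lemma bound_aux (A S q D e c : ℝ) (hA : 1 ≤ A) (hS : q ≤ S) (hq : 1 ≤ q)
    (he : |e| ≤ 1 / q) (hc : |D| + 1 ≤ c) :
    |D * e / (A * S)| ≤ c / (q * S) := by
  have hq0 : (0:ℝ) < q := by linarith
  have hS0 : (0:ℝ) < S := by linarith
  have hA0 : (0:ℝ) < A := by linarith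
  rw [abs_div, abs_of_pos (mul_pos hA0 hS0),
    div_le_div_iff₀ (by positivity) (by positivity)]
  have h1 : |D * e| ≤ |D| * (1 / q) := by
    rw [abs_mul]
    exact mul_le_mul_of_nonneg_left he (abs_nonneg D)
  have h2 : |D| * (1 / q) * (q * S) = |D| * S := by
    field_simp
  have h3 : |D * e| * (q * S) ≤ |D| * S := by
    rw [← h2]
    exact mul_le_mul_of_nonneg_right h1 (by positivity)
  have hc0 : (0:ℝ) < c := by nlinarith [abs_nonneg D]
  have e1 : (0:ℝ) ≤ (A - 1) * (c * S) := by
    apply mul_nonneg (by linarith)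
    positivity
  have e2 : (0:ℝ) ≤ (c - (|D| + 1)) * S := by
    apply mul_nonneg (by linarith) (le_of_lt hS0)
  have h4 : |D| * S ≤ c * (A * S) := by nlinarith [e1, e2, hS0]
  linarith


set_option maxHeartbeats 1000000 in
/-- for ω a binary word with matrix M_ω = ((ρ,σ,τ),(ρ₁,σ₁,τ₁),(ρ₂,σ₂,τ₂)),
ξ ∈ [0,1] and (α,β) = φ_ω(ξ,0), there is c > 0 independent of p,q such that whenever
0 ≤ p ≤ q, q > 0 and |ξq - p| ≤ 1/q, setting s = ρq+σp, m = ρ₁q+σ₁p, n = ρ₂q+σ₂p,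
one has |α - m/s| ≤ c/(qs) and |β - n/s| ≤ c/(qs). -/
theorem approx_bound (ω : List Bool) (ξ : ℝ) (hξ : ξ ∈ Set.Icc (0 : ℝ) 1) :
    ∃ c > 0, ∀ p q : ℤ, 0 < q → 0 ≤ p → p ≤ q → |ξ * (q : ℝ) - (p : ℝ)| ≤ 1 / (q : ℝ) →
      |(phiWord ω (ξ, 0)).1 -
          ((Mword ω 1 0 * q + Mword ω 1 1 * p : ℤ) : ℝ) /
            ((Mword ω 0 0 * q + Mword ω 0 1 * p : ℤ) : ℝ)|
        ≤ c / ((q : ℝ) * ((Mword ω 0 0 * q + Mword ω 0 1 * p : ℤ) : ℝ)) ∧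
      |(phiWord ω (ξ, 0)).2 -
          ((Mword ω 2 0 * q + Mword ω 2 1 * p : ℤ) : ℝ) /
            ((Mword ω 0 0 * q + Mword ω 0 1 * p : ℤ) : ℝ)|
        ≤ c / ((q : ℝ) * ((Mword ω 0 0 * q + Mword ω 0 1 * p : ℤ) : ℝ)) := by
  obtain ⟨hξ0, hξ1⟩ := hξ
  obtain ⟨h0, h1⟩ := Mword_entries ω
  set ρ := (Mword ω 0 0 : ℝ) with hρdef
  set σ := (Mword ω 0 1 : ℝ) with hσdef
  set ρ₁ := (Mword ω 1 0 : ℝ) with hρ₁def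
  set σ₁ := (Mword ω 1 1 : ℝ) with hσ₁def
  set ρ₂ := (Mword ω 2 0 : ℝ) with hρ₂def
  set σ₂ := (Mword ω 2 1 : ℝ) with hσ₂def
  have hρ : (1:ℝ) ≤ ρ := by rw [hρdef]; exact_mod_cast h1
  have hσ : (0:ℝ) ≤ σ := by rw [hσdef]; exact_mod_cast h0 0 1
  have hρ₁ : (0:ℝ) ≤ ρ₁ := by rw [hρ₁def]; exact_mod_cast h0 1 0
  have hσ₁ : (0:ℝ) ≤ σ₁ := by rw [hσ₁def]; exact_mod_cast h0 1 1
  have hρ₂ : (0:ℝ) ≤ ρ₂ := by rw [hρ₂def]; exact_mod_cast h0 2 0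
  have hσ₂ : (0:ℝ) ≤ σ₂ := by rw [hσ₂def]; exact_mod_cast h0 2 1
  have hphi := phi_eq ω ξ hξ0
  set A := ρ + σ * ξ with hAdef
  have hA : (1:ℝ) ≤ A := by nlinarith
  have hA0 : A ≠ 0 := by positivity
  refine ⟨|σ₁ * ρ - ρ₁ * σ| + |σ₂ * ρ - ρ₂ * σ| + 1, by positivity, ?_⟩
  intro p q hq hp hpq happ
  have hq1 : (1:ℝ) ≤ (q:ℝ) := by exact_mod_cast hq
  have hp0 : (0:ℝ) ≤ (p:ℝ) := by exact_mod_cast hp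
  have hS : (q:ℝ) ≤ ρ * q + σ * p := by nlinarith
  have hS0 : (0:ℝ) < ρ * q + σ * p := by linarith
  have hcast : ((Mword ω 0 0 * q + Mword ω 0 1 * p : ℤ) : ℝ) = ρ * q + σ * p := by
    push_cast [hρdef, hσdef]; ring
  have hcast1 : ((Mword ω 1 0 * q + Mword ω 1 1 * p : ℤ) : ℝ) = ρ₁ * q + σ₁ * p := by
    push_cast [hρ₁def, hσ₁def]; ring
  have hcast2 : ((Mword ω 2 0 * q + Mword ω 2 1 * p : ℤ) : ℝ) = ρ₂ * q + σ₂ * p := by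
    push_cast [hρ₂def, hσ₂def]; ring
  rw [hphi, hcast, hcast1, hcast2]
  have key1 : (ρ₁ + σ₁ * ξ) / A - (ρ₁ * q + σ₁ * p) / (ρ * q + σ * p)
      = (σ₁ * ρ - ρ₁ * σ) * (ξ * q - p) / (A * (ρ * q + σ * p)) := by
    field_simp
    ring
  have key2 : (ρ₂ + σ₂ * ξ) / A - (ρ₂ * q + σ₂ * p) / (ρ * q + σ * p)
      = (σ₂ * ρ - ρ₂ * σ) * (ξ * q - p) / (A * (ρ * q + σ * p)) := by
    field_simp
    ring
  constructor
  · simp only []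
    rw [show (ρ₁ + σ₁ * ξ) / (ρ + σ * ξ) = (ρ₁ + σ₁ * ξ) / A from by rw [hAdef]]
    rw [key1]
    exact bound_aux A (ρ * q + σ * p) q (σ₁ * ρ - ρ₁ * σ) (ξ * q - p) _ hA hS hq1 happ
      (by linarith [abs_nonneg (σ₂ * ρ - ρ₂ * σ)])
  · simp only []
    rw [show (ρ₂ + σ₂ * ξ) / (ρ + σ * ξ) = (ρ₂ + σ₂ * ξ) / A from by rw [hAdef]]
    rw [key2]
    exact bound_aux A (ρ * q + σ * p) q (σ₂ * ρ - ρ₂ * σ) (ξ * q - p) _ hA hS hq1 happ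
      (by linarith [abs_nonneg (σ₁ * ρ - ρ₁ * σ)])
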